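/- Let W be symmetric doubly stochastic with spectral gap δ and β = ‖I - W‖₂. For X, X̂ ∈ ℝ^{d×n} with column average matrix X̄ = X(1/n)𝟙𝟙ᵀ, and X⁺ = X + γ X̂(W - I), for every α > 0: ‖X⁺ - X̄‖_F² ≤ (1-δγ)²(1+α)‖X - X̄‖_F² + γ²(1+α⁻¹)β²‖X̂ - X‖_F², provided 0 ≤ γ ≤ 1. -/

import Mathlib

set_option synthInstance.maxHeartbeats 1000000
set_option maxHeartbeats 1000000

open scoped RealInnerProductSpace
open Matrix

/-- The spectral (ℓ₂ operator) norm of a real matrix. -/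
noncomputable def specNorm {m n : ℕ} (M : Matrix (Fin m) (Fin n) ℝ) : ℝ :=
  ‖LinearMap.toContinuousLinearMap (Matrix.toEuclideanLin M)‖

/-- The Frobenius norm of a real matrix. -/
noncomputable def frobNorm {m n : ℕ} (M : Matrix (Fin m) (Fin n) ℝ) : ℝ :=
  Real.sqrt (∑ i, ∑ j, (M i j) ^ 2)

section Helpers

lemma euclid_normsq {n : ℕ} (b : OrthonormalBasis (Fin n) ℝ (EuclideanSpace ℝ (Fin n)))
    (x : EuclideanSpace ℝ (Fin n)) : ‖x‖^2 = ∑ i, (b.repr x i)^2 := by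
  rw [← b.repr.norm_map x, EuclideanSpace.norm_eq, Real.sq_sqrt (by positivity)]
  simp [sq_abs]

lemma euclid_innersum {n : ℕ} (b : OrthonormalBasis (Fin n) ℝ (EuclideanSpace ℝ (Fin n)))
    (x y : EuclideanSpace ℝ (Fin n)) : ⟪x, y⟫ = ∑ i, (b.repr x i) * (b.repr y i) := by
  rw [show ⟪x, y⟫ = ⟪b.repr x, b.repr y⟫ from (b.repr.inner_map_map x y).symm]
  simp only [PiLp.inner_apply, RCLike.inner_apply, conj_trivial]
  exact Finset.sum_congr rfl fun i _ => mul_comm _ _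

lemma normsq_symm {n : ℕ} (x : Fin n → ℝ) :
    ‖(WithLp.equiv 2 (Fin n → ℝ)).symm x‖^2 = ∑ j, x j ^ 2 := by
  rw [EuclideanSpace.norm_eq, Real.sq_sqrt (by positivity)]
  simp [sq_abs]

lemma hermit_transpose {n : ℕ} {W : Matrix (Fin n) (Fin n) ℝ} (hH : W.IsHermitian) : Wᵀ = W := by
  have h : W.IsSymm := by simpa using hH
  exact h

lemma repr_mulVec {n : ℕ} {W : Matrix (Fin n) (Fin n) ℝ} (hH : W.IsHermitian)
    (x : Fin n → ℝ) (i : Fin n) :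
    hH.eigenvectorBasis.repr ((WithLp.equiv 2 (Fin n → ℝ)).symm (W *ᵥ x)) i
      = hH.eigenvalues i * hH.eigenvectorBasis.repr ((WithLp.equiv 2 (Fin n → ℝ)).symm x) i := by
  have key : ⇑(hH.eigenvectorBasis i) ⬝ᵥ (W *ᵥ x)
      = hH.eigenvalues i * (⇑(hH.eigenvectorBasis i) ⬝ᵥ x) := by
    rw [Matrix.dotProduct_mulVec, ← Matrix.mulVec_transpose, hermit_transpose hH,
      hH.mulVec_eigenvectorBasis, smul_dotProduct, smul_eq_mul]
  simp only [OrthonormalBasis.repr_apply_apply, PiLp.inner_apply, RCLike.inner_apply,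
    conj_trivial, WithLp.equiv_symm_apply, PiLp.toLp_apply]
  simpa [dotProduct, mul_comm] using key

lemma key_vec {n : ℕ} {W : Matrix (Fin n) (Fin n) ℝ} (hH : W.IsHermitian)
    (hrow : W *ᵥ 1 = 1) (δ : ℝ) (i₀ : Fin n) (h1 : hH.eigenvalues i₀ = 1)
    (h2 : ∀ i, i ≠ i₀ → |hH.eigenvalues i| ≤ 1 - δ)
    (γ : ℝ) (hγ0 : 0 ≤ γ) (hγ1 : γ ≤ 1)
    (v : Fin n → ℝ) (hv : ∑ j, v j = 0) :
    ∑ j, ((1 - γ) • v + γ • (W *ᵥ v)) j ^ 2 ≤ (1 - δ*γ)^2 * ∑ j, v j ^ 2 := by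
  set b := hH.eigenvectorBasis with hb
  set lam := hH.eigenvalues with hlam
  set ev : EuclideanSpace ℝ (Fin n) := (WithLp.equiv 2 (Fin n → ℝ)).symm v with hev
  have hrepr : ∀ i, b.repr ((WithLp.equiv 2 (Fin n → ℝ)).symm ((1 - γ) • v + γ • (W *ᵥ v))) i
      = (1 - γ + γ * lam i) * b.repr ev i := by
    intro i
    have hlin : (WithLp.equiv 2 (Fin n → ℝ)).symm ((1 - γ) • v + γ • (W *ᵥ v))
        = (1-γ) • ev + γ • ((WithLp.equiv 2 (Fin n → ℝ)).symm (W *ᵥ v)) := rfl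
    rw [hlin, map_add, _root_.map_smul, _root_.map_smul]
    simp only [PiLp.smul_apply, PiLp.add_apply, smul_eq_mul]
    rw [repr_mulVec hH v i]
    ring
  have lhs_eq : ∑ j, ((1-γ) • v + γ • (W *ᵥ v)) j ^2
      = ∑ i, ((1 - γ + γ * lam i) * b.repr ev i)^2 := by
    rw [← normsq_symm, euclid_normsq b]
    exact Finset.sum_congr rfl (fun i _ => by rw [hrepr i])
  have rhs_eq : ∑ j, v j ^2 = ∑ i, (b.repr ev i)^2 := by
    rw [← normsq_symm, euclid_normsq b]
  rw [lhs_eq, rhs_eq, Finset.mul_sum]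
  apply Finset.sum_le_sum
  intro i _
  by_cases hi : i = i₀
  · subst hi
    by_cases hδ : 0 < δ
    · have hc0 : b.repr ev i = 0 := by
        set dcoef : Fin n → ℝ :=
          fun j => b.repr ((WithLp.equiv 2 (Fin n → ℝ)).symm (1 : Fin n → ℝ)) j with hdc
        have hd : ∀ j, j ≠ i → dcoef j = 0 := by
          intro j hj
          have hrm := repr_mulVec hH 1 j
          rw [hrow] at hrm
          have hne : lam j ≠ 1 := by
            intro h
            have h2' := h2 j hj
            rw [h] at h2'
            simp at h2'
            linarith
          have hrm' : dcoef j = lam j * dcoef j := hrm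
          have hz : (1 - lam j) * dcoef j = 0 := by
            rw [sub_mul, one_mul]; linarith [hrm']
          rcases mul_eq_zero.mp hz with h | h
          · exact absurd (by linarith : lam j = 1) hne
          · exact h
        have hsum0 : ∑ j, dcoef j * b.repr ev j = 0 := by
          rw [← euclid_innersum b _ ev]
          simp only [PiLp.inner_apply, RCLike.inner_apply, conj_trivial,
            WithLp.equiv_symm_apply, PiLp.toLp_apply, Pi.one_apply, one_mul, mul_one, hev]
          exact hv
        rw [Finset.sum_eq_single i (fun j _ hj => by rw [hd j hj, zero_mul])
          (fun h => absurd (Finset.mem_univ i) h)] at hsum0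
        have hdne : dcoef i ≠ 0 := by
          have hnorm : (∑ j, dcoef j ^ 2) = (n : ℝ) := by
            rw [← euclid_normsq b, normsq_symm]
            simp
          rw [Finset.sum_eq_single i (fun j _ hj => by rw [hd j hj]; ring)
            (fun h => absurd (Finset.mem_univ i) h)] at hnorm
          intro h
          rw [h] at hnorm
          have : 0 < n := Fin.pos i
          have : (0:ℝ) < (n:ℝ) := by exact_mod_cast this
          simp at hnorm
          linarith
        exact (mul_eq_zero.mp hsum0).resolve_left hdne
      rw [hc0]
      simp
    · push_neg at hδ
      rw [h1]
      have h1le : (1:ℝ) ≤ 1 - δ * γ := by nlinarith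
      nlinarith [sq_nonneg (b.repr ev i), mul_self_le_mul_self (zero_le_one) h1le,
        sq_nonneg (b.repr ev i * (1 - δ * γ))]
  · have h2' := h2 i hi
    have habs : |1 - γ + γ * lam i| ≤ 1 - δ * γ := by
      calc |1 - γ + γ * lam i| ≤ |1 - γ| + |γ * lam i| := abs_add_le _ _
        _ ≤ (1 - γ) + γ * (1 - δ) := by
            rw [abs_of_nonneg (by linarith), abs_mul, abs_of_nonneg hγ0]
            have := abs_nonneg (lam i)
            nlinarith
        _ = 1 - δ * γ := by ring
    obtain ⟨hlo, hhi⟩ := abs_le.mp habs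
    have hsq : (1 - γ + γ * lam i)^2 ≤ (1 - δ*γ)^2 := sq_le_sq' hlo hhi
    calc ((1 - γ + γ * lam i) * b.repr ev i)^2
        = (1 - γ + γ * lam i)^2 * (b.repr ev i)^2 := by ring
      _ ≤ (1 - δ*γ)^2 * (b.repr ev i)^2 :=
          mul_le_mul_of_nonneg_right hsq (sq_nonneg _)

lemma frobNorm_sq {m n : ℕ} (M : Matrix (Fin m) (Fin n) ℝ) :
    frobNorm M ^2 = ∑ i, ∑ j, (M i j)^2 := by
  rw [frobNorm, Real.sq_sqrt (by positivity)]

lemma frobNorm_nonneg {m n : ℕ} (M : Matrix (Fin m) (Fin n) ℝ) : 0 ≤ frobNorm M :=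
  Real.sqrt_nonneg _

lemma frobNorm_eq_norm {m n : ℕ} (M : Matrix (Fin m) (Fin n) ℝ) :
    frobNorm M = ‖(WithLp.equiv 2 (Fin m × Fin n → ℝ)).symm (fun p => M p.1 p.2)‖ := by
  rw [frobNorm, EuclideanSpace.norm_eq]
  congr 1
  rw [Fintype.sum_prod_type]
  refine Finset.sum_congr rfl fun i _ => Finset.sum_congr rfl fun j _ => ?_
  simp [sq_abs, WithLp.equiv_symm_apply, Real.norm_eq_abs]

lemma frobNorm_add_le {m n : ℕ} (A B : Matrix (Fin m) (Fin n) ℝ) :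
    frobNorm (A + B) ≤ frobNorm A + frobNorm B := by
  rw [frobNorm_eq_norm, frobNorm_eq_norm, frobNorm_eq_norm]
  have h : (WithLp.equiv 2 (Fin m × Fin n → ℝ)).symm (fun p => (A+B) p.1 p.2)
      = (WithLp.equiv 2 (Fin m × Fin n → ℝ)).symm (fun p => A p.1 p.2)
        + (WithLp.equiv 2 (Fin m × Fin n → ℝ)).symm (fun p => B p.1 p.2) := by
    ext p; simp [Matrix.add_apply, WithLp.equiv_symm_apply]
  rw [h]; exact norm_add_le _ _

lemma specNorm_nonneg {m n : ℕ} (M : Matrix (Fin m) (Fin n) ℝ) : 0 ≤ specNorm M :=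
  norm_nonneg _

lemma specNorm_neg {m n : ℕ} (M : Matrix (Fin m) (Fin n) ℝ) : specNorm (-M) = specNorm M := by
  unfold specNorm
  rw [map_neg, map_neg, norm_neg]

lemma mulVec_sq_le {k : ℕ} (M : Matrix (Fin k) (Fin k) ℝ) (y : Fin k → ℝ) :
    ∑ j, (M *ᵥ y) j ^2 ≤ specNorm M ^2 * ∑ j, y j ^2 := by
  have h1 : ‖(WithLp.equiv 2 (Fin k → ℝ)).symm (M *ᵥ y)‖
      ≤ specNorm M * ‖(WithLp.equiv 2 (Fin k → ℝ)).symm y‖ := by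
    have h := (LinearMap.toContinuousLinearMap (Matrix.toEuclideanLin M)).le_opNorm
      ((WithLp.equiv 2 (Fin k → ℝ)).symm y)
    simpa [specNorm, LinearMap.coe_toContinuousLinearMap',
      Matrix.toEuclideanLin_apply_piLp_toLp, WithLp.equiv_symm_apply] using h
  have h2 := pow_le_pow_left₀ (norm_nonneg _) h1 2
  rw [mul_pow, normsq_symm, normsq_symm] at h2
  exact h2

lemma young_sq {a b α : ℝ} (ha : 0 ≤ a) (hb : 0 ≤ b) (hα : 0 < α) :
    (a + b)^2 ≤ (1 + α) * a^2 + (1 + α⁻¹) * b^2 := by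
  have hinv : 0 < α⁻¹ := inv_pos.mpr hα
  have key : 2 * a * b ≤ α * a^2 + α⁻¹ * b^2 := by
    nlinarith [sq_nonneg (α * a - b), mul_inv_cancel₀ (ne_of_gt hα), hα.le]
  nlinarith

lemma mul_entry_symm {d k : ℕ} (A : Matrix (Fin d) (Fin k) ℝ) (M : Matrix (Fin k) (Fin k) ℝ)
    (hM : Mᵀ = M) (r : Fin d) (j : Fin k) :
    (A * M) r j = (M *ᵥ (fun t => A r t)) j := by
  rw [Matrix.mul_apply]
  simp only [Matrix.mulVec, dotProduct]
  refine Finset.sum_congr rfl fun t _ => ?_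
  rw [show M j t = M t j from by conv_lhs => rw [← hM, Matrix.transpose_apply]]
  ring

lemma frob_mul_symm_le {d k : ℕ} (A : Matrix (Fin d) (Fin k) ℝ) (M : Matrix (Fin k) (Fin k) ℝ)
    (hM : Mᵀ = M) :
    frobNorm (A * M) ^2 ≤ specNorm M ^2 * frobNorm A ^2 := by
  rw [frobNorm_sq, frobNorm_sq, Finset.mul_sum]
  refine Finset.sum_le_sum fun r _ => ?_
  calc ∑ j, (A*M) r j ^2 = ∑ j, (M *ᵥ fun t => A r t) j ^2 :=
        Finset.sum_congr rfl fun j _ => by rw [mul_entry_symm A M hM r j]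
    _ ≤ specNorm M ^2 * ∑ j, (A r j)^2 := mulVec_sq_le M _

lemma frobNorm_smul_sq {m n : ℕ} (c : ℝ) (M : Matrix (Fin m) (Fin n) ℝ) :
    frobNorm (c • M) ^2 = c^2 * frobNorm M ^2 := by
  rw [frobNorm_sq, frobNorm_sq, Finset.mul_sum]
  refine Finset.sum_congr rfl fun i _ => ?_
  rw [Finset.mul_sum]
  refine Finset.sum_congr rfl fun j _ => ?_
  simp [Matrix.smul_apply]
  ring

lemma mul_M'_entry {d n : ℕ} (Y : Matrix (Fin d) (Fin n) ℝ) (W : Matrix (Fin n) (Fin n) ℝ)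
    (hWt : Wᵀ = W) (γ : ℝ) (r : Fin d) (j : Fin n) :
    (Y * ((1-γ) • (1 : Matrix (Fin n) (Fin n) ℝ) + γ • W)) r j
      = ((1-γ) • (fun t => Y r t) + γ • (W *ᵥ fun t => Y r t)) j := by
  have hsym : ((1-γ) • (1 : Matrix (Fin n) (Fin n) ℝ) + γ • W)ᵀ
      = (1-γ) • (1 : Matrix (Fin n) (Fin n) ℝ) + γ • W := by
    rw [Matrix.transpose_add, Matrix.transpose_smul, Matrix.transpose_smul,
      Matrix.transpose_one, hWt]
  rw [mul_entry_symm Y _ hsym r j]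
  simp only [Matrix.add_mulVec, Matrix.smul_mulVec, Matrix.one_mulVec, Pi.add_apply,
    Pi.smul_apply, smul_eq_mul]

lemma frob_spec {d n : ℕ} {W : Matrix (Fin n) (Fin n) ℝ} (hH : W.IsHermitian)
    (hrow : W *ᵥ 1 = 1) (δ : ℝ) (i₀ : Fin n) (h1 : hH.eigenvalues i₀ = 1)
    (h2 : ∀ i, i ≠ i₀ → |hH.eigenvalues i| ≤ 1 - δ)
    (γ : ℝ) (hγ0 : 0 ≤ γ) (hγ1 : γ ≤ 1)
    (Y : Matrix (Fin d) (Fin n) ℝ) (hY : ∀ r, ∑ j, Y r j = 0) :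
    frobNorm (Y * ((1-γ) • (1 : Matrix (Fin n) (Fin n) ℝ) + γ • W)) ^2
      ≤ (1 - δ*γ)^2 * frobNorm Y ^2 := by
  rw [frobNorm_sq, frobNorm_sq, Finset.mul_sum]
  refine Finset.sum_le_sum fun r _ => ?_
  calc ∑ j, (Y * ((1-γ) • (1 : Matrix (Fin n) (Fin n) ℝ) + γ • W)) r j ^2
      = ∑ j, ((1-γ) • (fun t => Y r t) + γ • (W *ᵥ fun t => Y r t)) j ^2 :=
        Finset.sum_congr rfl fun j _ => by rw [mul_M'_entry Y W (hermit_transpose hH) γ r j]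
    _ ≤ (1 - δ*γ)^2 * ∑ j, (Y r j)^2 :=
        key_vec hH hrow δ i₀ h1 h2 γ hγ0 hγ1 (fun t => Y r t) (hY r)

lemma alg_id {d n : ℕ} (X Xh : Matrix (Fin d) (Fin n) ℝ) (P W : Matrix (Fin n) (Fin n) ℝ)
    (γ : ℝ) (hPW : P * W = P) :
    X + γ • (Xh * (W - 1)) - X * P
      = (X - X * P) * ((1-γ) • (1 : Matrix (Fin n) (Fin n) ℝ) + γ • W)
        + γ • ((Xh - X) * (W - 1)) := by
  have e1 : (X - X * P) * ((1-γ) • (1 : Matrix (Fin n) (Fin n) ℝ) + γ • W)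
      = ((1-γ) • X - (1-γ) • (X*P)) + (γ • (X*W) - γ • (X*P)) := by
    rw [Matrix.mul_add, Matrix.mul_smul, Matrix.mul_smul, Matrix.mul_one, Matrix.sub_mul,
      Matrix.mul_assoc, hPW, smul_sub, smul_sub]
  have e2 : Xh * (W - 1) = Xh * W - Xh := by rw [Matrix.mul_sub, Matrix.mul_one]
  have e3 : (Xh - X) * (W - 1) = Xh * W - Xh - (X * W - X) := by
    rw [Matrix.sub_mul, e2, Matrix.mul_sub, Matrix.mul_one]
  rw [e1, e2, e3]
  module

end Helpers

/-- Descent lemma for the gossip step: with W symmetric doubly stochastic with spectral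
gap δ (eigenvalue 1 at index i₀, all others of absolute value ≤ 1 - δ),
β = ‖I - W‖₂, X̄ = X(1/n)𝟙𝟙ᵀ and X⁺ = X + γ X̂(W - I), for every α > 0 and 0 ≤ γ ≤ 1:
‖X⁺ - X̄‖_F² ≤ (1-δγ)²(1+α)‖X - X̄‖_F² + γ²(1+α⁻¹)β²‖X̂ - X‖_F². -/
theorem gossip_step_descent {d n : ℕ} (W : Matrix (Fin n) (Fin n) ℝ)
    (hH : W.IsHermitian)
    (hrow : W.mulVec 1 = 1) (hcol : Matrix.vecMul 1 W = 1)
    (δ : ℝ) (i₀ : Fin n) (h1 : hH.eigenvalues i₀ = 1)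
    (h2 : ∀ i, i ≠ i₀ → |hH.eigenvalues i| ≤ 1 - δ)
    (γ α : ℝ) (hγ0 : 0 ≤ γ) (hγ1 : γ ≤ 1) (hα : 0 < α)
    (X Xh : Matrix (Fin d) (Fin n) ℝ) :
    frobNorm (X + γ • (Xh * (W - 1))
        - X * ((n : ℝ)⁻¹ • Matrix.of (fun _ _ => (1 : ℝ)))) ^ 2
      ≤ (1 - δ * γ) ^ 2 * (1 + α)
          * frobNorm (X - X * ((n : ℝ)⁻¹ • Matrix.of (fun _ _ => (1 : ℝ)))) ^ 2
        + γ ^ 2 * (1 + α⁻¹) * specNorm (1 - W) ^ 2 * frobNorm (Xh - X) ^ 2 := by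
  set J : Matrix (Fin n) (Fin n) ℝ := (n : ℝ)⁻¹ • Matrix.of (fun _ _ => (1 : ℝ)) with hJ
  have hn : (n:ℝ) ≠ 0 := Nat.cast_ne_zero.mpr (Fin.pos i₀).ne'
  -- J * W = J
  have hJW : J * W = J := by
    ext i j
    simp only [hJ, Matrix.mul_apply, Matrix.smul_apply, Matrix.of_apply, smul_eq_mul, one_mul]
    rw [← Finset.mul_sum]
    have : ∑ k, W k j = 1 := by
      have := congrFun hcol j
      simpa [Matrix.vecMul, dotProduct] using this
    rw [this]
    ring
  -- key algebraic identity
  have hid : X + γ • (Xh * (W - 1)) - X * J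
      = (X - X * J) * ((1-γ) • (1 : Matrix (Fin n) (Fin n) ℝ) + γ • W)
        + γ • ((Xh - X) * (W - 1)) := alg_id X Xh J W γ hJW
  -- rows of X - X*J sum to zero
  have hY : ∀ r, ∑ j, (X - X * J) r j = 0 := by
    intro r
    have hXJ : ∀ j, (X * J) r j = (∑ k, X r k) * (n:ℝ)⁻¹ := by
      intro j
      simp only [hJ, Matrix.mul_apply, Matrix.smul_apply, Matrix.of_apply, smul_eq_mul,
        one_mul, mul_one]
      rw [Finset.sum_mul]
    simp only [Matrix.sub_apply, Finset.sum_sub_distrib]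
    rw [Finset.sum_congr rfl (fun j _ => hXJ j), Finset.sum_const, Finset.card_univ,
      Fintype.card_fin, nsmul_eq_mul]
    field_simp
    simp
  -- put the pieces together
  set A := (X - X * J) * ((1-γ) • (1 : Matrix (Fin n) (Fin n) ℝ) + γ • W) with hA
  set B := γ • ((Xh - X) * (W - 1)) with hB
  erw [hid]
  have t2 : frobNorm (A + B) ^2 ≤ (frobNorm A + frobNorm B)^2 :=
    pow_le_pow_left₀ (frobNorm_nonneg _) (frobNorm_add_le A B) 2
  have t3 := young_sq (frobNorm_nonneg A) (frobNorm_nonneg B) hα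
  have t4 : frobNorm A ^2 ≤ (1 - δ*γ)^2 * frobNorm (X - X*J) ^2 :=
    frob_spec hH hrow δ i₀ h1 h2 γ hγ0 hγ1 (X - X*J) hY
  have hWt : (W - 1)ᵀ = W - 1 := by
    rw [Matrix.transpose_sub, Matrix.transpose_one, hermit_transpose hH]
  have t5 : frobNorm B ^2 = γ^2 * frobNorm ((Xh - X) * (W - 1)) ^2 := frobNorm_smul_sq γ _
  have t6 : frobNorm ((Xh - X) * (W - 1)) ^2 ≤ specNorm (W - 1) ^2 * frobNorm (Xh - X) ^2 :=
    frob_mul_symm_le (Xh - X) (W - 1) hWt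
  have t7 : specNorm (1 - W) = specNorm (W - 1) := by
    rw [show (1 : Matrix (Fin n) (Fin n) ℝ) - W = -(W - 1) from (neg_sub _ _).symm, specNorm_neg]
  have h1α : (0:ℝ) ≤ 1 + α := by linarith
  have h2α : (0:ℝ) ≤ 1 + α⁻¹ := by
    have := inv_pos.mpr hα
    linarith
  calc frobNorm (A + B) ^2 ≤ (1 + α) * frobNorm A ^2 + (1 + α⁻¹) * frobNorm B ^2 :=
        le_trans t2 t3
    _ ≤ (1 + α) * ((1 - δ*γ)^2 * frobNorm (X - X*J) ^2)
        + (1 + α⁻¹) * (γ^2 * (specNorm (W - 1) ^2 * frobNorm (Xh - X) ^2)) := by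
        have b1 := mul_le_mul_of_nonneg_left t4 h1α
        have b2 : frobNorm B ^2 ≤ γ^2 * (specNorm (W - 1) ^2 * frobNorm (Xh - X) ^2) := by
          rw [t5]
          exact mul_le_mul_of_nonneg_left t6 (sq_nonneg γ)
        have b2' := mul_le_mul_of_nonneg_left b2 h2α
        linarith
    _ = (1 - δ * γ) ^ 2 * (1 + α) * frobNorm (X - X * J) ^ 2
        + γ ^ 2 * (1 + α⁻¹) * specNorm (1 - W) ^ 2 * frobNorm (Xh - X) ^ 2 := by
        rw [t7]; ring
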